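/- In an exterior (graded-commutative) ℚ-algebra, let β_0, β_1, …, β_k be elements of degree 1 of the form β_i = Σ_{j ∈ R} ⟨χ_i, j⟩ b_j, where {b_j}_{j∈R} are degree-1 generators, R spans a k-dimensional rational vector space V*, χ_i ∈ V, and the product b_{j_1}⋯b_{j_m} vanishes whenever {j_1,…,j_m} is not contained in a common simplicial cone of a fixed complete simplicial fan in V*. If χ_0, …, χ_k are linearly dependent in V, then β_0 β_1 ⋯ β_k = 0. -/

import Mathlib

section Aux

variable {A : Type*} [Ring A] [Algebra ℚ A] {ι : Type*}

/-- product with a repeated generator at head is zero -/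
lemma head_mem_prod_zero (b : ι → A)
    (hsq : ∀ j, b j * b j = 0)
    (hanti : ∀ j j', b j * b j' = -(b j' * b j)) :
    ∀ (t : List ι) (a : ι), a ∈ t → b a * (t.map b).prod = 0 := by
  intro t
  induction t with
  | nil => intro a ha; simp at ha
  | cons c t' ih =>
    intro a ha
    rcases List.mem_cons.mp ha with h | h
    · subst h
      simp only [List.map_cons, List.prod_cons, ← mul_assoc, hsq, zero_mul]
    · simp only [List.map_cons, List.prod_cons, ← mul_assoc, hanti a c]
      rw [neg_mul, mul_assoc, ih a h, mul_zero, neg_zero]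

lemma dup_prod_zero (b : ι → A)
    (hsq : ∀ j, b j * b j = 0)
    (hanti : ∀ j j', b j * b j' = -(b j' * b j)) :
    ∀ (l : List ι), ¬ l.Nodup → (l.map b).prod = 0 := by
  intro l
  induction l with
  | nil => intro h; exact absurd List.nodup_nil h
  | cons a t ih =>
    intro h
    rw [List.nodup_cons, not_and_or] at h
    simp only [List.map_cons, List.prod_cons]
    rcases h with h | h
    · exact head_mem_prod_zero b hsq hanti t a (not_not.mp h)
    · rw [ih h, mul_zero]

end Aux

theorem beta_prod_eq_zero (k : ℕ) (A : Type*) [Ring A] [Algebra ℚ A]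
    (ι : Type*) [Fintype ι] (ray : ι → (Fin k → ℚ)) (hray : Function.Injective ray)
    (Δ : Set (Finset ι))
    (hsimp : ∀ C ∈ Δ, LinearIndependent ℚ (fun j : C => ray j))
    (b : ι → A)
    (hsq : ∀ j, b j * b j = 0)
    (hanti : ∀ j j', b j * b j' = -(b j' * b j))
    (hmono : ∀ l : List ι, (¬ ∃ C ∈ Δ, ∀ j ∈ l, j ∈ C) → (l.map b).prod = 0)
    (χ : Fin (k + 1) → (Fin k → ℚ)) (hdep : ¬ LinearIndependent ℚ χ) :
    (List.ofFn (fun i : Fin (k + 1) =>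
      ∑ j : ι, (∑ t : Fin k, χ i t * ray j t) • b j)).prod = 0 := by
  classical
  -- Step 1: any product of k+1 generators is zero
  have hzero : ∀ l : List ι, l.length = k + 1 → (l.map b).prod = 0 := by
    intro l hl
    by_cases hnd : l.Nodup
    · apply hmono
      rintro ⟨C, hC, hsub⟩
      have hind := hsimp C hC
      -- card of C ≤ k
      have hcard : Fintype.card C ≤ Module.finrank ℚ (Fin k → ℚ) :=
        hind.fintype_card_le_finrank
      rw [Module.finrank_fin_fun] at hcard
      have h1 : l.toFinset ⊆ C := by
        intro j hj; exact hsub j (List.mem_toFinset.mp hj)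
      have h2 : l.toFinset.card = k + 1 := by
        rw [List.toFinset_card_of_nodup hnd, hl]
      have h3 : k + 1 ≤ C.card := h2 ▸ Finset.card_le_card h1
      rw [Fintype.card_coe] at hcard
      omega
    · exact dup_prod_zero b hsq hanti l hnd
  -- Step 2: span structure
  set S : ℕ → Submodule ℚ A :=
    fun m => Submodule.span ℚ { x | ∃ l : List ι, l.length = m ∧ x = (l.map b).prod }
  have hmul : ∀ m (x y : A), x ∈ S 1 → y ∈ S m → x * y ∈ S (m + 1) := by
    intro m x y hx hy
    induction hx using Submodule.span_induction with
    | mem x hx =>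
      obtain ⟨l1, hl1, rfl⟩ := hx
      induction hy using Submodule.span_induction with
      | mem y hy =>
        obtain ⟨l2, hl2, rfl⟩ := hy
        exact Submodule.subset_span ⟨l1 ++ l2, by simp [hl1, hl2, Nat.add_comm], by
          simp⟩
      | zero => rw [mul_zero]; exact (S (m+1)).zero_mem
      | add y z _ _ hy hz => rw [mul_add]; exact (S (m+1)).add_mem hy hz
      | smul c y _ hy => rw [mul_smul_comm]; exact (S (m+1)).smul_mem c hy
    | zero => rw [zero_mul]; exact (S (m+1)).zero_mem
    | add x z _ _ hx hz => rw [add_mul]; exact (S (m+1)).add_mem hx hz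
    | smul c x _ hx => rw [smul_mul_assoc]; exact (S (m+1)).smul_mem c hx
  have hprod : ∀ (L : List A), (∀ x ∈ L, x ∈ S 1) → L.prod ∈ S L.length := by
    intro L
    induction L with
    | nil => intro _; exact Submodule.subset_span ⟨[], rfl, by simp⟩
    | cons a t ih =>
      intro h
      rw [List.prod_cons, List.length_cons]
      exact hmul t.length a t.prod (h a List.mem_cons_self)
        (ih fun x hx => h x (List.mem_cons_of_mem a hx))
  -- the S (k+1) submodule is zero
  have hS0 : S (k + 1) = ⊥ := by
    rw [Submodule.span_eq_bot]
    rintro x ⟨l, hl, rfl⟩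
    exact hzero l hl
  have hβ : ∀ x ∈ List.ofFn (fun i : Fin (k + 1) =>
      ∑ j : ι, (∑ t : Fin k, χ i t * ray j t) • b j), x ∈ S 1 := by
    intro x hx
    rw [List.mem_ofFn] at hx
    obtain ⟨i, rfl⟩ := hx
    exact Submodule.sum_mem _ fun j _ => (S 1).smul_mem _
      (Submodule.subset_span ⟨[j], rfl, by simp⟩)
  have := hprod _ hβ
  rw [List.length_ofFn, hS0, Submodule.mem_bot] at this
  exact this
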